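/- For the fixpoint labeling λ* of an initialized reachability game, the maximal finite range satisfies mR(λ*) ≤ O(|V|^{(|V|+3)·(|Π|+2)}); consequently the counter graph 𝐂(λ*), of size |V|·2^{|Π|}·(mR(λ*)+2)^{|Π|}, has size at most exponential in the size of the game. -/

import Mathlib

open scoped Classical

namespace SPE

variable {V : Type*} {P : Type*}

/-- Vertices of the extended game: a base vertex together with the set of players
having already visited their target set. -/
abbrev XV (V P : Type*) := V × Set P

/-- Edges of the extended game induced by base edges `E` and target sets `F`. -/
def XEdge (E : V → V → Prop) (F : P → Set V) (a b : XV V P) : Prop :=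
  E a.1 b.1 ∧ b.2 = a.2 ∪ {i | b.1 ∈ F i}

/-- Plays of the extended game starting at `x`. -/
def IsPlay (E : V → V → Prop) (F : P → Set V) (x : XV V P) (ρ : ℕ → XV V P) : Prop :=
  ρ 0 = x ∧ ∀ k, XEdge E F (ρ k) (ρ (k + 1))

/-- Cost of player `i` along the suffix `ρ_{≥ n}`: the least `k` such that `i` belongs to
the second component of `ρ (n + k)`, and `⊤` if there is no such `k`. -/
noncomputable def costFrom (ρ : ℕ → XV V P) (n : ℕ) (i : P) : ℕ∞ :=
  sInf ((fun k : ℕ => (k : ℕ∞)) '' {k | i ∈ (ρ (n + k)).2})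

/-- Cost of player `i` along the play `ρ` of the extended game. -/
noncomputable def cost (ρ : ℕ → XV V P) (i : P) : ℕ∞ := costFrom ρ 0 i

/-- `λ`-consistency of a play. -/
def Consistent (own : V → P) (lam : XV V P → ℕ∞) (ρ : ℕ → XV V P) : Prop :=
  ∀ n, costFrom ρ n (own (ρ n).1) ≤ lam (ρ n)

/-- The set `Λ(x)` of `λ`-consistent plays from `x`. -/
def Lam (E : V → V → Prop) (F : P → Set V) (own : V → P) (lam : XV V P → ℕ∞)
    (x : XV V P) : Set (ℕ → XV V P) :=
  {ρ | IsPlay E F x ρ ∧ Consistent own lam ρ}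

/-- The initial labeling `λ⁰`. -/
noncomputable def lam0 (own : V → P) : XV V P → ℕ∞ :=
  fun v => if own v.1 ∈ v.2 then 0 else ⊤

/-- The labeling update operator. -/
noncomputable def update (E : V → V → Prop) (F : P → Set V) (own : V → P)
    (lam : XV V P → ℕ∞) (v : XV V P) : ℕ∞ :=
  if own v.1 ∈ v.2 then 0
  else ⨅ w ∈ {w : XV V P | XEdge E F v w},
    (1 + sSup ((fun ρ => cost ρ (own v.1)) '' Lam E F own lam w))

/-- Vertices of the counter graph: an extended vertex with one counter per player. -/
abbrev CV (V P : Type*) := XV V P × (P → ℕ∞)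

/-- Edges of the counter graph `𝐂(λ)`. -/
def CEdge (E : V → V → Prop) (F : P → Set V) (own : V → P) (lam : XV V P → ℕ∞)
    (a b : CV V P) : Prop :=
  XEdge E F a.1 b.1 ∧
  ∀ i : P,
    (i ∈ b.1.2 ∧ b.2 i = 0) ∨
    (i ∉ b.1.2 ∧ own b.1.1 ≠ i ∧ 1 < a.2 i ∧ b.2 i = a.2 i - 1) ∨
    (i ∉ b.1.2 ∧ own b.1.1 = i ∧ 1 < a.2 i ∧ b.2 i = min (a.2 i - 1) (lam b.1))

/-- The starting vertex `v^C` of the counter graph associated with `v`. -/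
noncomputable def startC (own : V → P) (lam : XV V P → ℕ∞) (v : XV V P) : CV V P :=
  (v, fun i => if i ∈ v.2 then 0 else if own v.1 = i then lam v else ⊤)

/-- The maximal finite range of `λ` restricted to a set `S` of extended vertices. -/
noncomputable def mR (lam : XV V P → ℕ∞) (S : Set (XV V P)) : ℕ :=
  sSup {c : ℕ | ∃ w ∈ S, lam w = (c : ℕ∞)}

/-- A quantitative reachability game on `nV` vertices and `nP ≤ nV` players. -/
structure QRGame where
  nV : ℕ
  nP : ℕ
  hV : 2 ≤ nV
  hP : nP ≤ nV
  E : Fin nV → Fin nV → Prop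
  total : ∀ v, ∃ w, E v w
  own : Fin nV → Fin nP
  F : Fin nP → Set (Fin nV)

/-- for the fixpoint labeling `λ*` computed by the region-by-region
algorithm, the maximal finite range satisfies `mR(λ*) ≤ O(|V|^{(|V|+3)(|Π|+2)})`;
consequently the counter graph `𝐂(λ*)`, of size `|V|·2^{|Π|}·(mR(λ*)+2)^{|Π|}`, has
size at most exponential in the size of the game. -/


lemma costFrom_le_coe_iff {ρ : ℕ → XV V P} {n : ℕ} {i : P} {m : ℕ} :
    costFrom ρ n i ≤ (m : ℕ∞) ↔ ∃ k ≤ m, i ∈ (ρ (n + k)).2 := by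
  constructor
  · intro h
    by_contra hc
    push_neg at hc
    have h2 : ((m + 1 : ℕ) : ℕ∞) ≤ costFrom ρ n i := by
      apply le_sInf
      rintro a ⟨k, hk, rfl⟩
      have hkm : ¬ k ≤ m := fun hkm => hc k hkm hk
      show ((m + 1 : ℕ) : ℕ∞) ≤ (k : ℕ∞)
      exact_mod_cast (by omega : m + 1 ≤ k)
    have := h2.trans h
    exact absurd (by exact_mod_cast this) (by omega)
  · rintro ⟨k, hk, hmem⟩
    refine le_trans (sInf_le ⟨k, hmem, rfl⟩) ?_
    show ((k : ℕ) : ℕ∞) ≤ (m : ℕ∞)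
    exact_mod_cast hk

lemma costFrom_eq_top_iff {ρ : ℕ → XV V P} {n : ℕ} {i : P} :
    costFrom ρ n i = ⊤ ↔ ∀ k, i ∉ (ρ (n + k)).2 := by
  rw [costFrom, sInf_eq_top]
  constructor
  · intro h k hk
    exact absurd (h _ ⟨k, hk, rfl⟩) (by simp)
  · rintro h a ⟨k, hk, rfl⟩
    exact absurd hk (h k)

lemma costFrom_le_of_mem {ρ : ℕ → XV V P} {n : ℕ} {i : P}
    (h : i ∈ (ρ n).2) (a : ℕ∞) : costFrom ρ n i ≤ a := by
  refine le_trans ?_ (zero_le : (0 : ℕ∞) ≤ a)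
  have : costFrom ρ n i ≤ ((0 : ℕ) : ℕ∞) :=
    costFrom_le_coe_iff.2 ⟨0, le_rfl, by simpa using h⟩
  simpa using this

lemma cost_attain {ρ : ℕ → XV V P} {i : P} {c : ℕ} (h : cost ρ i = (c : ℕ∞)) :
    i ∈ (ρ c).2 ∧ ∀ k < c, i ∉ (ρ k).2 := by
  have h1 : costFrom ρ 0 i ≤ (c : ℕ∞) := le_of_eq h
  obtain ⟨k, hk, hmem⟩ := costFrom_le_coe_iff.1 h1
  have hmin : ∀ k' < c, i ∉ (ρ k').2 := by
    intro k' hk' hmem'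
    have : costFrom ρ 0 i ≤ (k' : ℕ∞) :=
      costFrom_le_coe_iff.2 ⟨k', le_rfl, by simpa using hmem'⟩
    rw [cost] at h
    rw [h] at this
    exact absurd (by exact_mod_cast this) (by omega)
  have : k = c := by
    rcases lt_or_eq_of_le hk with h' | h'
    · exact absurd (by simpa using hmem) (hmin k h')
    · exact h'
  subst this
  exact ⟨by simpa using hmem, hmin⟩

lemma play_snd_mono {E : V → V → Prop} {F : P → Set V} {x : XV V P} {ρ : ℕ → XV V P}
    (h : IsPlay E F x ρ) : ∀ {m n : ℕ}, m ≤ n → (ρ m).2 ⊆ (ρ n).2 := by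
  intro m n hmn
  induction n, hmn using Nat.le_induction with
  | base => exact subset_rfl
  | succ n hmn ih =>
      refine ih.trans ?_
      rw [(h.2 n).2]
      exact Set.subset_union_left

lemma Lam_mono {E : V → V → Prop} {F : P → Set V} {own : V → P} {l l' : XV V P → ℕ∞}
    (h : ∀ w, l w ≤ l' w) (x : XV V P) : Lam E F own l x ⊆ Lam E F own l' x := by
  rintro ρ ⟨hp, hcons⟩
  exact ⟨hp, fun n => (hcons n).trans (h _)⟩

lemma update_mono {E : V → V → Prop} {F : P → Set V} {own : V → P} {l l' : XV V P → ℕ∞}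
    (h : ∀ w, l w ≤ l' w) (w : XV V P) : update E F own l w ≤ update E F own l' w := by
  unfold update
  split
  · exact le_rfl
  · refine iInf_mono fun w' => iInf_mono fun hw' => ?_
    exact add_le_add_right (sSup_le_sSup (Set.image_mono (Lam_mono h w'))) 1

lemma update_lam0_le {E : V → V → Prop} {F : P → Set V} {own : V → P} (w : XV V P) :
    update E F own (lam0 own) w ≤ lam0 own w := by
  by_cases h : own w.1 ∈ w.2 <;> simp [update, lam0, h]

lemma chain_step {E : V → V → Prop} {F : P → Set V} {own : V → P} {l0 l1 : XV V P → ℕ∞}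
    (h0 : ∀ w, update E F own l0 w ≤ l0 w)
    (hs : ∀ w, l1 w = l0 w ∨ l1 w = update E F own l0 w) :
    (∀ w, l1 w ≤ l0 w) ∧ (∀ w, update E F own l1 w ≤ l1 w) := by
  have hle : ∀ w, l1 w ≤ l0 w := by
    intro w
    rcases hs w with h | h
    · rw [h]
    · rw [h]; exact h0 w
  refine ⟨hle, fun w => ?_⟩
  rcases hs w with h | h
  · rw [h]; exact le_trans (update_mono hle w) (h0 w)
  · rw [h]; exact update_mono hle w

lemma lowerset_filter_card {c : ℕ} {Q : ℕ → Prop} [DecidablePred Q]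
    (hdc : ∀ m n, m ≤ n → n < c → Q n → Q m) (n : ℕ) :
    n < ((Finset.range c).filter Q).card ↔ n < c ∧ Q n := by
  constructor
  · intro h
    by_contra hc'
    have hsub : ((Finset.range c).filter Q) ⊆ Finset.range n := by
      intro m hm
      simp only [Finset.mem_filter, Finset.mem_range] at hm ⊢
      by_contra hmn
      push_neg at hmn
      exact hc' ⟨lt_of_le_of_lt hmn hm.1, hdc n m hmn hm.1 hm.2⟩
    have := Finset.card_le_card hsub
    rw [Finset.card_range] at this
    omega
  · rintro ⟨hnc, hQn⟩
    have hsub : Finset.range (n + 1) ⊆ (Finset.range c).filter Q := by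
      intro m hm
      simp only [Finset.mem_range] at hm
      simp only [Finset.mem_filter, Finset.mem_range]
      exact ⟨by omega, hdc m n (by omega) hnc hQn⟩
    have := Finset.card_le_card hsub
    rw [Finset.card_range] at this
    omega

/-! ### the bounding sequence -/

def Wb (nV nP c0 : ℕ) : ℕ → ℕ
  | t =>
    if h : nP + 1 ≤ t then 0
    else 2 ^ nV * (1 + c0 + 2 * Wb nV nP c0 (t + 1)) + Wb nV nP c0 (t + 1)
  termination_by t => nP + 1 - t
  decreasing_by omega

def Db (nV nP c0 t : ℕ) : ℕ := 1 + c0 + 2 * Wb nV nP c0 (t + 1)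

def Vb (nV nP c0 t : ℕ) : ℕ := 2 ^ nV * Db nV nP c0 t

lemma Wb_of_le {nV nP c0 t : ℕ} (h : t ≤ nP) :
    Wb nV nP c0 t = Vb nV nP c0 t + Wb nV nP c0 (t + 1) := by
  rw [Wb, dif_neg (by omega)]; rfl

lemma Wb_of_gt {nV nP c0 t : ℕ} (h : nP + 1 ≤ t) : Wb nV nP c0 t = 0 := by
  rw [Wb, dif_pos h]

lemma Wb_succ_le {nV nP c0 t : ℕ} : Wb nV nP c0 (t + 1) ≤ Wb nV nP c0 t := by
  rcases le_or_gt t nP with h | h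
  · rw [Wb_of_le h]; omega
  · rw [Wb_of_gt (by omega), Wb_of_gt (by omega)]

lemma Wb_antitone {nV nP c0 : ℕ} {s t : ℕ} (h : s ≤ t) :
    Wb nV nP c0 t ≤ Wb nV nP c0 s := by
  induction t, h using Nat.le_induction with
  | base => exact le_rfl
  | succ n hmn ih => exact le_trans Wb_succ_le ih

lemma Wb_sum {nV nP c0 : ℕ} : ∀ d t, nP + 1 ≤ t + d →
    Wb nV nP c0 t = ∑ u ∈ Finset.Icc t nP, Vb nV nP c0 u := by
  intro d
  induction d with
  | zero =>
      intro t ht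
      rw [Finset.Icc_eq_empty (by omega), Finset.sum_empty, Wb_of_gt (by omega)]
  | succ d ih =>
      intro t ht
      rcases le_or_gt t nP with h | h
      · rw [Wb_of_le h, ih (t + 1) (by omega), Finset.Icc_eq_cons_Ioc h,
          Finset.sum_cons, ← Finset.Icc_add_one_left_eq_Ioc]
      · rw [Finset.Icc_eq_empty (by omega), Finset.sum_empty, Wb_of_gt (by omega)]

lemma Wb_geom {nV nP c0 : ℕ} : ∀ j t, nP + 1 ≤ t + j →
    1 + c0 + 2 * Wb nV nP c0 t ≤ (1 + c0) * 2 ^ ((nV + 2) * j) := by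
  intro j
  induction j with
  | zero =>
      intro t ht
      rw [Wb_of_gt (by omega)]
      simp
  | succ j ih =>
      intro t ht
      have hpow : (1 : ℕ) ≤ 2 ^ ((nV + 2) * (j + 1)) := Nat.one_le_two_pow
      rcases le_or_gt t nP with h | h
      · have e : 1 + c0 + 2 * Wb nV nP c0 t
            = (1 + 2 ^ (nV + 1)) * (1 + c0 + 2 * Wb nV nP c0 (t + 1)) := by
          rw [Wb_of_le h]; unfold Vb Db; ring
        rw [e]
        calc (1 + 2 ^ (nV + 1)) * (1 + c0 + 2 * Wb nV nP c0 (t + 1))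
            ≤ (1 + 2 ^ (nV + 1)) * ((1 + c0) * 2 ^ ((nV + 2) * j)) :=
              Nat.mul_le_mul_left _ (ih (t + 1) (by omega))
          _ ≤ 2 ^ (nV + 2) * ((1 + c0) * 2 ^ ((nV + 2) * j)) := by
              have h1 : (1 : ℕ) ≤ 2 ^ (nV + 1) := Nat.one_le_two_pow
              have h2 : 2 ^ (nV + 2) = 2 ^ (nV + 1) + 2 ^ (nV + 1) := by ring
              exact Nat.mul_le_mul_right _ (by omega)
          _ = (1 + c0) * 2 ^ ((nV + 2) * (j + 1)) := by
              rw [Nat.mul_succ, pow_add]; ring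
      · rw [Wb_of_gt (by omega)]
        calc 1 + c0 + 2 * 0 = (1 + c0) * 1 := by ring
          _ ≤ (1 + c0) * 2 ^ ((nV + 2) * (j + 1)) := Nat.mul_le_mul_left _ hpow


lemma mod_step (a m : ℕ) (hm : 0 < m) :
    ((a + 1) % m = a % m + 1) ∨ ((a + 1) % m = 0 ∧ a % m + 1 = m) := by
  rcases Nat.lt_or_ge 1 m with hm1 | hm1
  · have h1 : (a + 1) % m = (a % m + 1) % m := by
      rw [Nat.add_mod, Nat.mod_eq_of_lt hm1]
    have h2 : a % m < m := Nat.mod_lt _ hm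
    rcases Nat.lt_or_ge (a % m + 1) m with h3 | h3
    · left; rw [h1, Nat.mod_eq_of_lt h3]
    · right
      have h4 : a % m + 1 = m := by omega
      rw [h1, h4, Nat.mod_self]
      exact ⟨rfl, rfl⟩
  · have hm' : m = 1 := by omega
    subst hm'
    right; simp [Nat.mod_one]

lemma sup_cost_le {nV nP : ℕ} (E : Fin nV → Fin nV → Prop) (F : Fin nP → Set (Fin nV))
    (own : Fin nV → Fin nP) (lam : XV (Fin nV) (Fin nP) → ℕ∞)
    (x : XV (Fin nV) (Fin nP)) (i : Fin nP) (ℓ : ℕ → ℕ)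
    (hl : ∀ w : XV (Fin nV) (Fin nP), x.2 ⊆ w.2 → ∀ c : ℕ, lam w = (c : ℕ∞) →
      c ≤ ℓ (w.2.ncard))
    (hsup : sSup ((fun ρ => cost ρ i) '' Lam E F own lam x) ≠ ⊤) :
    sSup ((fun ρ => cost ρ i) '' Lam E F own lam x)
      ≤ ((∑ t ∈ Finset.Icc x.2.ncard nP, (nV + 3 + 2 * ℓ t) : ℕ) : ℕ∞) := by
  apply sSup_le
  rintro a ⟨ρ, hρ, rfl⟩
  have hane : cost ρ i ≠ ⊤ := by
    intro h
    exact hsup (top_unique (le_sSup ⟨ρ, hρ, h⟩))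
  obtain ⟨c, hc⟩ : ∃ c : ℕ, cost ρ i = (c : ℕ∞) := ⟨(cost ρ i).toNat, (ENat.coe_toNat hane).symm⟩
  show cost ρ i ≤ _
  rw [hc, Nat.cast_le]
  by_contra hcB
  push_neg at hcB
  -- basic facts about the play ρ
  have hplay := hρ.1
  have hcons := hρ.2
  obtain ⟨hmemc, hminc⟩ := cost_attain hc
  have hsub0 : ∀ n, x.2 ⊆ (ρ n).2 := fun n => by
    rw [← hplay.1]; exact play_snd_mono hplay (Nat.zero_le n)
  have hcard_mono : ∀ m n : ℕ, m ≤ n → (ρ m).2.ncard ≤ (ρ n).2.ncard :=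
    fun m n h => Set.ncard_le_ncard (play_snd_mono hplay h) (Set.toFinite _)
  have hcard_le : ∀ n, (ρ n).2.ncard ≤ nP := fun n => by
    have := Set.ncard_le_ncard (Set.subset_univ (ρ n).2) (Set.toFinite _)
    simpa [Set.ncard_univ] using this
  set bt : ℕ → ℕ := fun t => ((Finset.range c).filter (fun n => (ρ n).2.ncard ≤ t)).card
    with hbt_def
  have hbt : ∀ t n, n < bt t ↔ (n < c ∧ (ρ n).2.ncard ≤ t) := fun t =>
    lowerset_filter_card (fun m n hmn _ hQ => le_trans (hcard_mono m n hmn) hQ)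
  have hbt_le : ∀ t, bt t ≤ c := fun t => by
    have := Finset.card_filter_le (Finset.range c) (fun n => (ρ n).2.ncard ≤ t)
    simpa using this
  have hbtnP : bt nP = c := by
    simp only [hbt_def]
    rw [Finset.filter_true_of_mem (fun n _ => hcard_le n), Finset.card_range]
  set g : ℕ → ℕ := fun u => if bt u = 0 then 0 else bt u + ℓ u with hg_def
  have hg_of_ne : ∀ u, bt u ≠ 0 → g u = bt u + ℓ u := by
    intro u hu
    simp only [hg_def]
    rw [if_neg hu]
  have hg_of_eq : ∀ u, bt u = 0 → g u = 0 := by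
    intro u hu
    simp only [hg_def]
    rw [if_pos hu]
  set Rt : ℕ → ℕ := fun t => (Finset.range (t + 1)).sup g with hRt_def
  -- main claim
  have HR : ∀ t, Rt t ≤ ∑ u ∈ Finset.Icc x.2.ncard t, (nV + 3 + 2 * ℓ u) := by
    intro t
    induction t using Nat.strong_induction_on with
    | _ t IH =>
    apply Finset.sup_le
    intro u hu
    rw [Finset.mem_range] at hu
    by_cases hbu : bt u = 0
    · rw [hg_of_eq u hbu]; exact Nat.zero_le _
    · rw [hg_of_ne u hbu]
      have hs0u : x.2.ncard ≤ u := by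
        obtain ⟨h0c, h0card⟩ := (hbt u 0).1 (Nat.pos_of_ne_zero hbu)
        have : x.2.ncard ≤ (ρ 0).2.ncard := by rw [hplay.1]
        omega
      rcases Nat.lt_or_ge u t with hut | hut
      · -- u < t : use IH at u
        have h1 : bt u + ℓ u ≤ Rt u := by
          have h := Finset.le_sup (f := g) (Finset.mem_range.2 (Nat.lt_succ_of_le (le_refl u)))
          rw [hg_of_ne u hbu] at h
          exact h
        refine le_trans (le_trans h1 (IH u hut)) ?_
        exact Finset.sum_le_sum_of_subset (Finset.Icc_subset_Icc_right (le_of_lt hut))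
      · -- u = t : the core
        have hut' : u = t := by omega
        subst hut'
        -- previous-level supremum
        set Rp : ℕ := if u = 0 then 0 else Rt (u - 1) with hRp_def
        have P1 : ∀ u', u' < u → bt u' ≠ 0 → bt u' + ℓ u' ≤ Rp := by
          intro u' hu' hbu'
          have hu0 : u ≠ 0 := by omega
          rw [hRp_def, if_neg hu0]
          have h := Finset.le_sup (f := g) (Finset.mem_range.2 (by omega : u' < u - 1 + 1))
          rw [hg_of_ne u' hbu'] at h
          exact h
        have hRp2 : Rp + (nV + 3 + 2 * ℓ u) ≤ ∑ v ∈ Finset.Icc x.2.ncard u, (nV + 3 + 2 * ℓ v) := by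
          rcases Nat.eq_zero_or_pos u with hu0 | hu0
          · subst hu0
            have hs0 : x.2.ncard = 0 := by omega
            rw [hRp_def, if_pos rfl, hs0]
            simp
          · rw [hRp_def, if_neg (by omega)]
            have hsplit : ∑ v ∈ Finset.Icc x.2.ncard u, (nV + 3 + 2 * ℓ v)
                = (∑ v ∈ Finset.Icc x.2.ncard (u - 1), (nV + 3 + 2 * ℓ v)) + (nV + 3 + 2 * ℓ u) := by
              have hu1 : u = (u - 1) + 1 := by omega
              rw [hu1]
              rw [Finset.sum_Icc_succ_top (by omega : x.2.ncard ≤ (u - 1) + 1)]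
              rw [← hu1]
            rw [hsplit]
            have := IH (u - 1) (by omega)
            omega
        -- suffices the core bound
        have hcore : bt u ≤ Rp + nV + 3 + ℓ u := by
          by_contra hbtt
          push_neg at hbtt
          -- hbtt : Rp + nV + 3 + ℓ u < bt u
          set u0 : ℕ := Rp + 1 with hu0_def
          have hbtc : bt u ≤ c := hbt_le u
          -- window facts
          have F3 : ∀ n, u0 ≤ n → n ≤ u0 + nV + ℓ u → (n < c ∧ (ρ n).2.ncard = u) := by
            intro n hn1 hn2
            have hnbt : n < bt u := by omega
            obtain ⟨hnc, hcle⟩ := (hbt u n).1 hnbt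
            refine ⟨hnc, le_antisymm hcle ?_⟩
            rcases Nat.eq_zero_or_pos u with hu0' | hu0'
            · omega
            · by_contra hlt
              push_neg at hlt
              have hnb : n < bt (u - 1) := (hbt (u - 1) n).2 ⟨hnc, by omega⟩
              have h2 := P1 (u - 1) (by omega) (by omega)
              omega
          have F4 : ∀ m n : ℕ, u0 ≤ m → m ≤ n → n ≤ u0 + nV + ℓ u → (ρ m).2 = (ρ n).2 := by
            intro m n h1 h2 h3
            have hm := F3 m h1 (by omega)
            have hn := F3 n (by omega) h3
            exact Set.eq_of_subset_of_ncard_le (play_snd_mono hplay h2)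
              (by omega) (Set.toFinite _)
          have F5 : ∀ n, u0 ≤ n → n ≤ u0 + nV → lam (ρ n) = ⊤ ∨ own (ρ n).1 ∈ (ρ n).2 := by
            intro n h1 h2
            by_contra hfree
            push_neg at hfree
            obtain ⟨hlam, hjn⟩ := hfree
            obtain ⟨dc, hdc⟩ : ∃ dc : ℕ, lam (ρ n) = (dc : ℕ∞) :=
              ⟨(lam (ρ n)).toNat, (ENat.coe_toNat hlam).symm⟩
            have hcn := hcons n
            rw [hdc] at hcn
            obtain ⟨d, hd, hdm⟩ := costFrom_le_coe_iff.1 hcn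
            have hdl : dc ≤ ℓ u := by
              have := hl (ρ n) (hsub0 n) dc hdc
              rwa [(F3 n h1 (by omega)).2] at this
            have heq : (ρ n).2 = (ρ (n + d)).2 := F4 n (n + d) h1 (by omega) (by omega)
            exact hjn (heq ▸ hdm)
          -- pigeonhole on the window
          obtain ⟨p, q, hpmem, hqmem, hpq, hfeq⟩ :
              ∃ p q, p ∈ Finset.Icc u0 (u0 + nV) ∧ q ∈ Finset.Icc u0 (u0 + nV) ∧ p < q ∧
                (ρ p).1 = (ρ q).1 := by
            have hcard : (Finset.univ : Finset (Fin nV)).card < (Finset.Icc u0 (u0 + nV)).card := by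
              rw [Finset.card_univ, Fintype.card_fin, Nat.card_Icc]
              omega
            obtain ⟨a, ha, b, hb, hab, hfab⟩ :=
              Finset.exists_ne_map_eq_of_card_lt_of_maps_to hcard
                (f := fun n => (ρ n).1) (fun a _ => Finset.mem_univ _)
            rcases hab.lt_or_gt with h | h
            · exact ⟨a, b, ha, hb, h, hfab⟩
            · exact ⟨b, a, hb, ha, h, hfab.symm⟩
          rw [Finset.mem_Icc] at hpmem hqmem
          have hρpq : ρ p = ρ q := by
            have := F4 p q hpmem.1 (le_of_lt hpq) (by omega)
            exact Prod.ext hfeq this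
          -- the pumped play
          set ρ' : ℕ → XV (Fin nV) (Fin nP) :=
            fun n => if n < p then ρ n else ρ (p + (n - p) % (q - p)) with hρ'_def
          have hqp0 : 0 < q - p := by omega
          have hE1 : ∀ n, p ≤ n → ρ' n = ρ (p + (n - p) % (q - p)) := by
            intro n hn
            simp only [hρ'_def]
            rw [if_neg (by omega)]
          have hE2 : ∀ n, n < p → ρ' n = ρ n := by
            intro n hn
            simp only [hρ'_def]
            rw [if_pos hn]
          have G0 : ∀ n, n < q → ρ' n = ρ n := by
            intro n hn
            by_cases h : n < p
            · exact hE2 n h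
            · push_neg at h
              rw [hE1 n h, Nat.mod_eq_of_lt (by omega), Nat.add_sub_cancel' h]
          have G1 : ∀ n, p ≤ n → ∃ m, p ≤ m ∧ m < q ∧ ρ' n = ρ m := by
            intro n hn
            refine ⟨p + (n - p) % (q - p), Nat.le_add_right _ _, ?_, hE1 n hn⟩
            have := Nat.mod_lt (n - p) hqp0
            omega
          have G2 : IsPlay E F x ρ' := by
            constructor
            · rw [G0 0 (by omega)]; exact hplay.1
            · intro n
              by_cases hn1 : n + 1 < q
              · rw [G0 n (by omega), G0 (n + 1) hn1]
                exact hplay.2 n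
              · by_cases hn2 : n + 1 = q
                · rw [G0 n (by omega)]
                  have h1 : ρ' (n + 1) = ρ p := by
                    rw [hE1 (n + 1) (by omega)]
                    have e : n + 1 - p = q - p := by omega
                    rw [e, Nat.mod_self, Nat.add_zero]
                  rw [h1, hρpq, ← hn2]
                  exact hplay.2 n
                · -- n ≥ q
                  have hnp : p ≤ n := by omega
                  have hkey : n + 1 - p = (n - p) + 1 := by omega
                  rcases mod_step (n - p) (q - p) hqp0 with hstep | hstep
                  · have e1 : ρ' n = ρ (p + (n - p) % (q - p)) := hE1 n hnp
                    have e2 : ρ' (n + 1) = ρ (p + (n - p) % (q - p) + 1) := by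
                      rw [hE1 (n + 1) (by omega), hkey, hstep]
                      ring_nf
                    rw [e1, e2]
                    exact hplay.2 _
                  · obtain ⟨hs1, hs2⟩ := hstep
                    have hmodlt := Nat.mod_lt (n - p) hqp0
                    have hrq : p + (n - p) % (q - p) = q - 1 := by omega
                    have e1 : ρ' n = ρ (q - 1) := by
                      rw [hE1 n hnp, hrq]
                    have e2 : ρ' (n + 1) = ρ p := by
                      rw [hE1 (n + 1) (by omega), hkey, hs1, Nat.add_zero]
                    rw [e1, e2, hρpq]
                    have := hplay.2 (q - 1)
                    rwa [(by omega : q - 1 + 1 = q)] at this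
          have G3 : Consistent own lam ρ' := by
            intro n
            by_cases hnp : n < p
            · have hn' : ρ' n = ρ n := G0 n (by omega)
              rw [hn']
              by_cases hjn : own (ρ n).1 ∈ (ρ n).2
              · exact costFrom_le_of_mem (by rw [hn']; exact hjn) _
              · by_cases hlam : lam (ρ n) = ⊤
                · rw [hlam]; exact le_top
                · obtain ⟨dc, hdc⟩ : ∃ dc : ℕ, lam (ρ n) = (dc : ℕ∞) :=
                    ⟨(lam (ρ n)).toNat, (ENat.coe_toNat hlam).symm⟩
                  have hcn := hcons n
                  rw [hdc] at hcn
                  obtain ⟨d, hd, hdm⟩ := costFrom_le_coe_iff.1 hcn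
                  have hdq : n + d < q := by
                    by_cases hnu : u0 ≤ n
                    · exfalso
                      rcases F5 n hnu (by omega) with h | h
                      · exact hlam h
                      · exact hjn h
                    · push_neg at hnu
                      have hnc : n < c := by omega
                      have ht''le : (ρ n).2.ncard ≤ u := ((hbt u n).1 (by omega)).2
                      rcases Nat.lt_or_ge (ρ n).2.ncard u with hlt | hge
                      · have hnbt : n < bt ((ρ n).2.ncard) := (hbt _ n).2 ⟨hnc, le_rfl⟩
                        have h2 := P1 ((ρ n).2.ncard) (by omega) (by omega)
                        have hdlt : dc ≤ ℓ ((ρ n).2.ncard) := hl (ρ n) (hsub0 n) dc hdc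
                        omega
                      · have hequ : (ρ n).2.ncard = u := by omega
                        exfalso
                        have hdlt : dc ≤ ℓ u := by
                          have := hl (ρ n) (hsub0 n) dc hdc
                          rwa [hequ] at this
                        have hnd_lt : n + d < bt u := by omega
                        obtain ⟨hndc, hndcard⟩ := (hbt u (n + d)).1 hnd_lt
                        have hseteq : (ρ n).2 = (ρ (n + d)).2 :=
                          Set.eq_of_subset_of_ncard_le
                            (play_snd_mono hplay (by omega)) (by omega) (Set.toFinite _)
                        exact hjn (hseteq ▸ hdm)
                  rw [hdc]
                  apply costFrom_le_coe_iff.2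
                  refine ⟨d, hd, ?_⟩
                  rw [G0 (n + d) hdq]
                  exact hdm
            · push_neg at hnp
              obtain ⟨m, hpm, hmq, hm⟩ := G1 n hnp
              rw [hm]
              rcases F5 m (by omega) (by omega) with h | h
              · rw [h]; exact le_top
              · exact costFrom_le_of_mem (by rw [hm]; exact h) _
          have G4 : cost ρ' i = ⊤ := by
            rw [cost, costFrom_eq_top_iff]
            intro k
            simp only [Nat.zero_add]
            by_cases hk : k < q
            · rw [G0 k hk]; exact hminc k (by omega)
            · obtain ⟨m, hpm, hmq, hm⟩ := G1 k (by omega)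
              rw [hm]; exact hminc m (by omega)
          exact hsup (top_unique (le_sSup ⟨ρ', ⟨G2, G3⟩, G4⟩))
        omega
  -- conclude: contradiction with hcB
  have hcRt : c ≤ Rt nP := by
    have h1 : g nP ≤ Rt nP :=
      Finset.le_sup (Finset.mem_range.2 (Nat.lt_succ_of_le (le_refl nP)))
    rw [hg_of_ne nP (by omega)] at h1
    omega
  have := HR nP
  omega


theorem stmt15 :
    ∃ C : ℕ, ∀ (G : QRGame)
      (lam : ℕ → XV (Fin G.nV) (Fin G.nP) → ℕ∞)
      (N : ℕ) (J : ℕ → Set (Fin G.nP))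
      (rk : XV (Fin G.nV) (Fin G.nP) → ℕ) (kstar : ℕ → ℕ),
      lam 0 = lam0 G.own →
      (∀ w, 1 ≤ rk w ∧ rk w ≤ N ∧ w.2 = J (rk w)) →
      (∀ a b, XEdge G.E G.F a b → rk a ≤ rk b) →
      (∀ a b, 1 ≤ a → a ≤ N → 1 ≤ b → b ≤ N → J a ⊆ J b → a ≤ b) →
      kstar N = 0 →
      (∀ n, 1 ≤ n → n < N → kstar (n + 1) < kstar n) →
      (∀ k, k ≤ kstar N → ∀ w,
        (rk w < N → lam (k + 1) w = lam k w) ∧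
        (N ≤ rk w → lam (k + 1) w = update G.E G.F G.own (lam k) w)) →
      (∀ n, 1 ≤ n → n < N → ∀ k, kstar (n + 1) < k → k ≤ kstar n → ∀ w,
        (rk w < n → lam (k + 1) w = lam k w) ∧
        (n ≤ rk w → lam (k + 1) w = update G.E G.F G.own (lam k) w)) →
      (∀ n, 1 ≤ n → n ≤ N → ∀ m w, n ≤ rk w →
        lam (kstar n + m) w = lam (kstar n) w) →
      mR (lam (kstar 1)) Set.univ ≤ C * G.nV ^ ((G.nV + 3) * (G.nP + 2)) ∧
      G.nV * 2 ^ G.nP * (mR (lam (kstar 1)) Set.univ + 2) ^ G.nP ≤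
        2 ^ (C * G.nV ^ C) := by
  refine ⟨8, ?_⟩
  intro G lam N J rk kstar h0 hrk _hrkE _hJ hkN hkdec hA hB _hC
  have hV2 := G.hV
  have hPle := G.hP
  set K := kstar 1 with hK
  set c0 := (G.nP + 1) * (G.nV + 3) with hc0
  have hN1 : 1 ≤ N := by
    have h1 := (hrk ((⟨0, by omega⟩ : Fin G.nV), (∅ : Set (Fin G.nP)))).1
    have h2 := (hrk ((⟨0, by omega⟩ : Fin G.nV), (∅ : Set (Fin G.nP)))).2.1
    omega
  -- every step of the run is either frozen or an update
  have Htrans : ∀ k, k < K → ∀ w, lam (k + 1) w = lam k w ∨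
      lam (k + 1) w = update G.E G.F G.own (lam k) w := by
    intro k hk w
    rcases Nat.eq_zero_or_pos k with rfl | hk1
    · have h := hA 0 (by omega) w
      rcases Nat.lt_or_ge (rk w) N with h' | h'
      · exact Or.inl (h.1 h')
      · exact Or.inr (h.2 h')
    · have hkK : k ≤ kstar 1 := by omega
      have hfind : ∀ j n, 1 ≤ n → n ≤ N → k ≤ kstar n → N - n ≤ j →
          ∃ n', 1 ≤ n' ∧ n' < N ∧ kstar (n' + 1) < k ∧ k ≤ kstar n' := by
        intro j
        induction j with
        | zero =>
            intro n h1 h2 h3 h4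
            exfalso
            have hEq : n = N := by omega
            rw [hEq, hkN] at h3
            omega
        | succ j ihj =>
            intro n h1 h2 h3 h4
            by_cases hnN : n = N
            · exfalso
              rw [hnN, hkN] at h3
              omega
            · rcases Nat.lt_or_ge (kstar (n + 1)) k with hlt | hge
              · exact ⟨n, h1, by omega, hlt, h3⟩
              · exact ihj (n + 1) (by omega) (by omega) hge (by omega)
      obtain ⟨n, hna, hnltN, hgt, hnb⟩ := hfind N 1 le_rfl hN1 hkK (by omega)
      have h := hB n hna hnltN k hgt hnb w
      rcases Nat.lt_or_ge (rk w) n with h' | h'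
      · exact Or.inl (h.1 h')
      · exact Or.inr (h.2 h')
  -- the labelings decrease along the run
  have HQ : ∀ k, k ≤ K → ∀ w, update G.E G.F G.own (lam k) w ≤ lam k w := by
    intro k
    induction k with
    | zero =>
        intro _ w
        rw [h0]
        exact update_lam0_le w
    | succ k ih =>
        intro hk w
        exact (chain_step (ih (by omega)) (Htrans k (by omega))).2 w
  have HLe : ∀ k, k < K → ∀ w, lam (k + 1) w ≤ lam k w := by
    intro k hk
    exact (chain_step (HQ k (by omega)) (Htrans k hk)).1
  -- count of finite-valued vertices at a coalition set
  set cnt : ℕ → Set (Fin G.nP) → ℕ := fun k S =>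
    ((Finset.univ : Finset (Fin G.nV)).filter (fun v => lam k (v, S) ≠ ⊤)).card with hcnt
  have hcnt_le : ∀ k S, cnt k S ≤ G.nV := by
    intro k S
    simp only [hcnt]
    calc ((Finset.univ : Finset (Fin G.nV)).filter (fun v => lam k (v, S) ≠ ⊤)).card
        ≤ (Finset.univ : Finset (Fin G.nV)).card := Finset.card_filter_le _ _
      _ = G.nV := by rw [Finset.card_univ, Fintype.card_fin]
  have hcnt_subset : ∀ k S, k < K →
      ((Finset.univ : Finset (Fin G.nV)).filter (fun v => lam k (v, S) ≠ ⊤)) ⊆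
      ((Finset.univ : Finset (Fin G.nV)).filter (fun v => lam (k + 1) (v, S) ≠ ⊤)) := by
    intro k S hk v hv
    simp only [Finset.mem_filter] at hv ⊢
    refine ⟨hv.1, fun h => hv.2 ?_⟩
    exact top_unique (h ▸ HLe k hk (v, S))
  have hcnt_mono : ∀ k S, k < K → cnt k S ≤ cnt (k + 1) S := by
    intro k S hk
    simp only [hcnt]
    exact Finset.card_le_card (hcnt_subset k S hk)
  have hcnt_lt : ∀ k S v, k < K → lam k (v, S) = ⊤ → lam (k + 1) (v, S) ≠ ⊤ →
      cnt k S < cnt (k + 1) S := by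
    intro k S v hk h1 h2
    simp only [hcnt]
    apply Finset.card_lt_card
    refine (Finset.ssubset_iff_of_subset (hcnt_subset k S hk)).2 ⟨v, ?_, ?_⟩
    · simp [h2]
    · simp [h1]
  have hcnt_pos : ∀ k S (v : Fin G.nV), lam k (v, S) ≠ ⊤ → 1 ≤ cnt k S := by
    intro k S v h
    simp only [hcnt]
    rw [Nat.succ_le_iff, Finset.card_pos]
    exact ⟨v, by simp [h]⟩
  -- the main induction step over levels
  have STEP : ∀ t : ℕ,
      (∀ u, t < u → u ≤ G.nP → ∀ k, k ≤ K → ∀ T : Set (Fin G.nP), T.ncard = u →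
        ∀ (v : Fin G.nV) (c : ℕ), lam k (v, T) = (c : ℕ∞) →
          c ≤ (2 ^ cnt k T - 1) * Db G.nV G.nP c0 u) →
      ∀ k, k ≤ K → ∀ S : Set (Fin G.nP), S.ncard = t →
        ∀ (v : Fin G.nV) (c : ℕ), lam k (v, S) = (c : ℕ∞) →
          c ≤ (2 ^ cnt k S - 1) * Db G.nV G.nP c0 t := by
    intro t HI k
    induction k with
    | zero =>
        intro _ S hS v c hval
        rw [h0] at hval
        simp only [lam0] at hval
        by_cases hown : G.own (v, S).1 ∈ (v, S).2
        · rw [if_pos hown] at hval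
          have hc0' : c = 0 := by exact_mod_cast hval.symm
          rw [hc0']
          exact Nat.zero_le _
        · rw [if_neg hown] at hval
          exact absurd hval.symm (by simp)
    | succ k ih =>
        intro hk1 S hS v c hval
        have hkK : k ≤ K := by omega
        have hkltK : k < K := by omega
        by_cases hklam : lam k (v, S) = ⊤
        · -- newly finite: must be an update step
          rcases Htrans k hkltK (v, S) with he | he
          · rw [hval, hklam] at he
            exact absurd he (by simp)
          rw [hval] at he
          unfold update at he
          by_cases hown : G.own (v, S).1 ∈ (v, S).2
          · rw [if_pos hown] at he
            have hc0' : c = 0 := by exact_mod_cast he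
            rw [hc0']
            exact Nat.zero_le _
          rw [if_neg hown] at he
          obtain ⟨w', hw', hne⟩ : ∃ w', w' ∈ {w : XV (Fin G.nV) (Fin G.nP) | XEdge G.E G.F (v, S) w} ∧
              (1 + sSup ((fun ρ => cost ρ (G.own (v, S).1)) ''
                Lam G.E G.F G.own (lam k) w')) ≠ ⊤ := by
            by_contra hcon
            push_neg at hcon
            have htop : (⨅ w ∈ {w : XV (Fin G.nV) (Fin G.nP) | XEdge G.E G.F (v, S) w},
                (1 + sSup ((fun ρ => cost ρ (G.own (v, S).1)) ''
                  Lam G.E G.F G.own (lam k) w))) = ⊤ := by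
              simp only [iInf_eq_top]
              exact fun w hw => hcon w hw
            rw [← he] at htop
            simp at htop
          have hcle : (c : ℕ∞) ≤ 1 + sSup ((fun ρ => cost ρ (G.own (v, S).1)) ''
              Lam G.E G.F G.own (lam k) w') :=
            he.le.trans (iInf₂_le w' hw')
          have hsne : sSup ((fun ρ => cost ρ (G.own (v, S).1)) ''
              Lam G.E G.F G.own (lam k) w') ≠ ⊤ := by
            intro hts
            rw [hts] at hne
            simp at hne
          have hsub : S ⊆ w'.2 := by
            rw [hw'.2]
            exact Set.subset_union_left
          have hs0t : t ≤ w'.2.ncard := by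
            rw [← hS]
            exact Set.ncard_le_ncard hsub (Set.toFinite _)
          have hs0P : w'.2.ncard ≤ G.nP := by
            have := Set.ncard_le_ncard (Set.subset_univ w'.2) (Set.toFinite _)
            simpa [Set.ncard_univ] using this
          set eb := (2 ^ cnt k w'.2 - 1) * Db G.nV G.nP c0 w'.2.ncard with heb
          set L : ℕ → ℕ := fun u => if u = w'.2.ncard then eb else Vb G.nV G.nP c0 u with hL
          have hLs0 : L w'.2.ncard = eb := by
            simp [hL]
          have hhl : ∀ w'' : XV (Fin G.nV) (Fin G.nP), w'.2 ⊆ w''.2 → ∀ cc : ℕ,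
              lam k w'' = (cc : ℕ∞) → cc ≤ L w''.2.ncard := by
            intro w'' hsub'' cc hcc
            by_cases hu : w''.2.ncard = w'.2.ncard
            · have hw2 : w'.2 = w''.2 :=
                Set.eq_of_subset_of_ncard_le hsub'' (le_of_eq hu) (Set.toFinite _)
              simp only [hL]
              rw [if_pos hu, heb]
              rcases Nat.eq_or_lt_of_le hs0t with heqt | hltt
              · have hSw : S = w'.2 :=
                  Set.eq_of_subset_of_ncard_le hsub (by omega) (Set.toFinite _)
                have hcc' : lam k (w''.1, S) = (cc : ℕ∞) := by
                  rw [show ((w''.1 : Fin G.nV), S) = w'' from Prod.ext rfl (by rw [hSw, hw2])]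
                  exact hcc
                have hbnd := ih hkK S hS w''.1 cc hcc'
                rw [← hSw, hS]
                exact hbnd
              · have hcc' : lam k (w''.1, w'.2) = (cc : ℕ∞) := by
                  rw [show ((w''.1 : Fin G.nV), w'.2) = w'' from Prod.ext rfl (by rw [hw2])]
                  exact hcc
                exact HI w'.2.ncard hltt hs0P k hkK w'.2 rfl w''.1 cc hcc'
            · simp only [hL]
              rw [if_neg hu]
              have hugt : w'.2.ncard < w''.2.ncard :=
                lt_of_le_of_ne (Set.ncard_le_ncard hsub'' (Set.toFinite _)) (Ne.symm hu)
              have hc1 := HI w''.2.ncard (by omega) (by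
                  have := Set.ncard_le_ncard (Set.subset_univ w''.2) (Set.toFinite _)
                  simpa [Set.ncard_univ] using this)
                k hkK w''.2 rfl w''.1 cc (by rw [Prod.mk.eta]; exact hcc)
              have h2 : (2 ^ cnt k w''.2 - 1) ≤ 2 ^ G.nV := by
                have h := Nat.pow_le_pow_right (by omega : 1 ≤ 2) (hcnt_le k w''.2)
                exact le_trans (Nat.sub_le _ _) h
              calc cc ≤ (2 ^ cnt k w''.2 - 1) * Db G.nV G.nP c0 w''.2.ncard := hc1
                _ ≤ 2 ^ G.nV * Db G.nV G.nP c0 w''.2.ncard := Nat.mul_le_mul_right _ h2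
                _ = Vb G.nV G.nP c0 w''.2.ncard := rfl
          have hpump := sup_cost_le G.E G.F G.own (lam k) w' (G.own (v, S).1) L hhl hsne
          have hfin : c ≤ 1 + ∑ u ∈ Finset.Icc w'.2.ncard G.nP, (G.nV + 3 + 2 * L u) := by
            have h2 := hcle.trans (add_le_add_right hpump 1)
            have h3 : (1 : ℕ∞) +
                ((∑ u ∈ Finset.Icc w'.2.ncard G.nP, (G.nV + 3 + 2 * L u) : ℕ) : ℕ∞)
                = ((1 + ∑ u ∈ Finset.Icc w'.2.ncard G.nP, (G.nV + 3 + 2 * L u) : ℕ) : ℕ∞) := by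
              push_cast
              ring
            rw [h3] at h2
            exact_mod_cast h2
          have hsum : ∑ u ∈ Finset.Icc w'.2.ncard G.nP, (G.nV + 3 + 2 * L u)
              ≤ c0 + 2 * eb + 2 * Wb G.nV G.nP c0 (w'.2.ncard + 1) := by
            rw [Finset.Icc_eq_cons_Ioc hs0P, Finset.sum_cons, hLs0]
            have hrest : ∑ u ∈ Finset.Ioc w'.2.ncard G.nP, (G.nV + 3 + 2 * L u)
                = ∑ u ∈ Finset.Ioc w'.2.ncard G.nP, (G.nV + 3 + 2 * Vb G.nV G.nP c0 u) := by
              refine Finset.sum_congr rfl fun u hu => ?_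
              rw [Finset.mem_Ioc] at hu
              simp only [hL]
              rw [if_neg (by omega)]
            rw [hrest, Finset.sum_add_distrib, Finset.sum_const, ← Finset.mul_sum,
              ← Finset.Icc_add_one_left_eq_Ioc, ← Wb_sum (G.nP + 1) (w'.2.ncard + 1) (by omega),
              Nat.card_Icc, smul_eq_mul]
            have hmul : ∀ m : ℕ, m ≤ G.nP → (G.nV + 3) + m * (G.nV + 3) ≤ c0 := by
              intro m hm
              have e1 : (G.nV + 3) + m * (G.nV + 3) = (1 + m) * (G.nV + 3) := by ring
              have e2 : (1 + m) * (G.nV + 3) ≤ (G.nP + 1) * (G.nV + 3) :=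
                Nat.mul_le_mul_right _ (by omega)
              omega
            have hmul2 := hmul (G.nP + 1 - (w'.2.ncard + 1)) (by omega)
            omega
          rcases Nat.eq_or_lt_of_le hs0t with heqt | hltt
          · -- same region
            have hSw : S = w'.2 :=
              Set.eq_of_subset_of_ncard_le hsub (by omega) (Set.toFinite _)
            have heb2 : eb = (2 ^ cnt k S - 1) * Db G.nV G.nP c0 t := by
              rw [heb, ← hSw, hS]
            have hcntlt : cnt k S < cnt (k + 1) S :=
              hcnt_lt k S v hkltK hklam (by rw [hval]; simp)
            obtain ⟨A, hA'⟩ : ∃ A, 2 ^ cnt k S = A + 1 :=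
              ⟨2 ^ cnt k S - 1, by
                have : (1 : ℕ) ≤ 2 ^ cnt k S := Nat.one_le_two_pow
                omega⟩
            have hpow2 : 2 ^ (cnt k S + 1) ≤ 2 ^ cnt (k + 1) S :=
              Nat.pow_le_pow_right (by omega) hcntlt
            have hWbeq : Wb G.nV G.nP c0 (w'.2.ncard + 1) = Wb G.nV G.nP c0 (t + 1) := by
              rw [← heqt]
            have hDb : Db G.nV G.nP c0 t = 1 + c0 + 2 * Wb G.nV G.nP c0 (t + 1) := rfl
            have e1 : 2 ^ (cnt k S + 1) - 1 = 2 * A + 1 := by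
              rw [pow_succ, hA']
              omega
            have e2 : eb = A * Db G.nV G.nP c0 t := by
              rw [heb2, hA']
              simp
            have hkey : c ≤ (2 ^ (cnt k S + 1) - 1) * Db G.nV G.nP c0 t := by
              rw [e1]
              have e3 : (2 * A + 1) * Db G.nV G.nP c0 t
                  = 2 * (A * Db G.nV G.nP c0 t) + Db G.nV G.nP c0 t := by ring
              rw [e3]
              omega
            exact hkey.trans (Nat.mul_le_mul_right _ (Nat.sub_le_sub_right hpow2 1))
          · -- strictly higher region
            have hcnt1 : 1 ≤ cnt (k + 1) S := hcnt_pos (k + 1) S v (by rw [hval]; simp)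
            have hVb : eb ≤ Vb G.nV G.nP c0 w'.2.ncard := by
              rw [heb]
              apply Nat.mul_le_mul_right
              have h := Nat.pow_le_pow_right (by omega : 1 ≤ 2) (hcnt_le k w'.2)
              exact le_trans (Nat.sub_le _ _) h
            have hWb1 : Vb G.nV G.nP c0 w'.2.ncard + Wb G.nV G.nP c0 (w'.2.ncard + 1)
                = Wb G.nV G.nP c0 w'.2.ncard := (Wb_of_le hs0P).symm
            have hWb2 : Wb G.nV G.nP c0 w'.2.ncard ≤ Wb G.nV G.nP c0 (t + 1) :=
              Wb_antitone (by omega)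
            have hDb : Db G.nV G.nP c0 t = 1 + c0 + 2 * Wb G.nV G.nP c0 (t + 1) := rfl
            have hfin2 : c ≤ Db G.nV G.nP c0 t := by omega
            calc c ≤ Db G.nV G.nP c0 t := hfin2
              _ = 1 * Db G.nV G.nP c0 t := (one_mul _).symm
              _ ≤ (2 ^ cnt (k + 1) S - 1) * Db G.nV G.nP c0 t := by
                  apply Nat.mul_le_mul_right
                  have h : (2 : ℕ) ^ 1 ≤ 2 ^ cnt (k + 1) S :=
                    Nat.pow_le_pow_right (by omega) hcnt1
                  simpa using Nat.sub_le_sub_right h 1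
        · -- already finite before the step
          obtain ⟨c'', hklam'⟩ : ∃ c'' : ℕ, lam k (v, S) = (c'' : ℕ∞) :=
            ⟨(lam k (v, S)).toNat, (ENat.coe_toNat hklam).symm⟩
          have hle := HLe k hkltK (v, S)
          rw [hval, hklam'] at hle
          have hcc : c ≤ c'' := by exact_mod_cast hle
          have h1 := ih hkK S hS v c'' hklam'
          have h2 : (2 : ℕ) ^ cnt k S ≤ 2 ^ cnt (k + 1) S :=
            Nat.pow_le_pow_right (by omega) (hcnt_mono k S hkltK)
          have h3 : (2 ^ cnt k S - 1) * Db G.nV G.nP c0 t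
              ≤ (2 ^ cnt (k + 1) S - 1) * Db G.nV G.nP c0 t :=
            Nat.mul_le_mul_right _ (by omega)
          omega
  have KEY : ∀ dd t, G.nP ≤ t + dd → ∀ k, k ≤ K → ∀ S : Set (Fin G.nP), S.ncard = t →
      ∀ (v : Fin G.nV) (c : ℕ), lam k (v, S) = (c : ℕ∞) →
        c ≤ (2 ^ cnt k S - 1) * Db G.nV G.nP c0 t := by
    intro dd
    induction dd with
    | zero =>
        intro t ht
        exact STEP t (fun u hu hu2 => absurd hu2 (by omega))
    | succ dd ihd =>
        intro t ht
        exact STEP t (fun u hu hu2 => ihd u (by omega))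
  -- numeric bound on Db
  have hDb_bound : ∀ t, 2 ^ G.nV * Db G.nV G.nP c0 t
      ≤ 2 ^ ((G.nV + 3) * (G.nP + 2) + G.nV) := by
    intro t
    have h1 : Db G.nV G.nP c0 t ≤ 1 + c0 + 2 * Wb G.nV G.nP c0 0 := by
      have hmono : Wb G.nV G.nP c0 (t + 1) ≤ Wb G.nV G.nP c0 0 :=
        Wb_antitone (Nat.zero_le (t + 1))
      have hDb : Db G.nV G.nP c0 t = 1 + c0 + 2 * Wb G.nV G.nP c0 (t + 1) := rfl
      omega
    have h2 := Wb_geom (nV := G.nV) (nP := G.nP) (c0 := c0) (G.nP + 1) 0 (by omega)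
    have h3 : 1 + c0 ≤ 2 ^ (G.nV + G.nP + 4) := by
      have hA : G.nP + 1 ≤ 2 ^ (G.nP + 1) := le_of_lt Nat.lt_two_pow_self
      have hB2 : G.nV + 3 ≤ 2 ^ (G.nV + 2) := by
        have := Nat.lt_two_pow_self (n := G.nV + 2)
        omega
      have hc0le : c0 ≤ 2 ^ (G.nP + 1) * 2 ^ (G.nV + 2) := by
        rw [hc0]
        exact Nat.mul_le_mul hA hB2
      have he1 : 2 ^ (G.nP + 1) * 2 ^ (G.nV + 2) = 2 ^ (G.nV + G.nP + 3) := by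
        rw [← pow_add]
        congr 1
        ring
      have h1le : (1 : ℕ) ≤ 2 ^ (G.nV + G.nP + 3) := Nat.one_le_two_pow
      have he2 : 2 ^ (G.nV + G.nP + 4) = 2 * 2 ^ (G.nV + G.nP + 3) := by
        rw [pow_succ]
        ring
      omega
    calc 2 ^ G.nV * Db G.nV G.nP c0 t
        ≤ 2 ^ G.nV * ((1 + c0) * 2 ^ ((G.nV + 2) * (G.nP + 1))) :=
          Nat.mul_le_mul le_rfl (by omega)
      _ ≤ 2 ^ G.nV * (2 ^ (G.nV + G.nP + 4) * 2 ^ ((G.nV + 2) * (G.nP + 1))) :=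
          Nat.mul_le_mul le_rfl (Nat.mul_le_mul_right _ h3)
      _ = 2 ^ (G.nV + ((G.nV + G.nP + 4) + (G.nV + 2) * (G.nP + 1))) := by
          rw [← pow_add, ← pow_add]
      _ = 2 ^ ((G.nV + 3) * (G.nP + 2) + G.nV) := by
          congr 1
          ring
  -- the final bound on mR
  have hmR : mR (lam K) Set.univ ≤ 2 ^ ((G.nV + 3) * (G.nP + 2) + G.nV) := by
    rw [mR]
    rcases Set.eq_empty_or_nonempty {c : ℕ | ∃ w ∈ Set.univ, lam K w = (c : ℕ∞)} with he | hne
    · rw [he, csSup_empty]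
      exact Nat.zero_le _
    · apply csSup_le hne
      rintro c2 ⟨w, -, hw⟩
      have hkey := KEY G.nP w.2.ncard (by omega) K le_rfl w.2 rfl w.1 c2
        (by rw [Prod.mk.eta]; exact hw)
      have h2 : (2 ^ cnt K w.2 - 1) * Db G.nV G.nP c0 w.2.ncard
          ≤ 2 ^ G.nV * Db G.nV G.nP c0 w.2.ncard := by
        apply Nat.mul_le_mul_right
        have h := Nat.pow_le_pow_right (by omega : 1 ≤ 2) (hcnt_le K w.2)
        exact le_trans (Nat.sub_le _ _) h
      exact le_trans hkey (le_trans h2 (hDb_bound w.2.ncard))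
  constructor
  · -- first conjunct
    have hmain : 2 ^ ((G.nV + 3) * (G.nP + 2) + G.nV)
        ≤ 8 * G.nV ^ ((G.nV + 3) * (G.nP + 2)) := by
      rcases Nat.lt_or_ge G.nV 4 with h4 | h4
      · have h2T : 2 ^ ((G.nV + 3) * (G.nP + 2)) ≤ G.nV ^ ((G.nV + 3) * (G.nP + 2)) :=
          Nat.pow_le_pow_left (by omega) _
        have h2v : 2 ^ G.nV ≤ 8 := by
          calc (2 : ℕ) ^ G.nV ≤ 2 ^ 3 := Nat.pow_le_pow_right (by omega) (by omega)
            _ = 8 := by norm_num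
        calc 2 ^ ((G.nV + 3) * (G.nP + 2) + G.nV)
            = 2 ^ ((G.nV + 3) * (G.nP + 2)) * 2 ^ G.nV := by rw [pow_add]
          _ ≤ G.nV ^ ((G.nV + 3) * (G.nP + 2)) * 8 := Nat.mul_le_mul h2T h2v
          _ = 8 * G.nV ^ ((G.nV + 3) * (G.nP + 2)) := by ring
      · have hTnV : G.nV ≤ (G.nV + 3) * (G.nP + 2) := by
          have h1 : (G.nV + 3) * 2 ≤ (G.nV + 3) * (G.nP + 2) :=
            Nat.mul_le_mul_left _ (by omega)
          omega
        calc 2 ^ ((G.nV + 3) * (G.nP + 2) + G.nV)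
            ≤ 2 ^ ((G.nV + 3) * (G.nP + 2) + (G.nV + 3) * (G.nP + 2)) :=
              Nat.pow_le_pow_right (by omega) (by omega)
          _ = 4 ^ ((G.nV + 3) * (G.nP + 2)) := by
              rw [← two_mul, pow_mul]
              norm_num
          _ ≤ G.nV ^ ((G.nV + 3) * (G.nP + 2)) := Nat.pow_le_pow_left (by omega) _
          _ ≤ 8 * G.nV ^ ((G.nV + 3) * (G.nP + 2)) :=
              Nat.le_mul_of_pos_left _ (by omega)
    omega
  · -- second conjunct
    have hm2 : mR (lam K) Set.univ + 2
        ≤ 2 ^ ((G.nV + 3) * (G.nP + 2) + G.nV + 2) := by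
      have h1 : (1 : ℕ) ≤ 2 ^ ((G.nV + 3) * (G.nP + 2) + G.nV) := Nat.one_le_two_pow
      have h2 : 2 ^ ((G.nV + 3) * (G.nP + 2) + G.nV + 2)
          = 4 * 2 ^ ((G.nV + 3) * (G.nP + 2) + G.nV) := by
        rw [pow_add]
        ring
      omega
    have hLHS : G.nV * 2 ^ G.nP * (mR (lam K) Set.univ + 2) ^ G.nP
        ≤ 2 ^ (G.nV + G.nP + ((G.nV + 3) * (G.nP + 2) + G.nV + 2) * G.nP) := by
      calc G.nV * 2 ^ G.nP * (mR (lam K) Set.univ + 2) ^ G.nP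
          ≤ 2 ^ G.nV * 2 ^ G.nP * (2 ^ ((G.nV + 3) * (G.nP + 2) + G.nV + 2)) ^ G.nP :=
            Nat.mul_le_mul (Nat.mul_le_mul (le_of_lt Nat.lt_two_pow_self) le_rfl)
              (Nat.pow_le_pow_left hm2 _)
        _ = 2 ^ (G.nV + G.nP + ((G.nV + 3) * (G.nP + 2) + G.nV + 2) * G.nP) := by
            rw [← pow_mul, ← pow_add, ← pow_add]
    have hexp : G.nV + G.nP + ((G.nV + 3) * (G.nP + 2) + G.nV + 2) * G.nP
        ≤ 8 * G.nV ^ 8 := by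
      have hsq : 2 * G.nV ≤ G.nV ^ 2 := by
        rw [pow_two]
        exact Nat.mul_le_mul_right _ hV2
      have hEx2 : (G.nV + 3) * (G.nP + 2) + G.nV + 2 ≤ 8 * G.nV ^ 2 := by
        have ha : G.nV + 3 ≤ 3 * G.nV := by omega
        have hb : G.nP + 2 ≤ 2 * G.nV := by omega
        have hc : (G.nV + 3) * (G.nP + 2) ≤ (3 * G.nV) * (2 * G.nV) := Nat.mul_le_mul ha hb
        have hd : (3 * G.nV) * (2 * G.nV) = 6 * G.nV ^ 2 := by ring
        omega
      have hprod : ((G.nV + 3) * (G.nP + 2) + G.nV + 2) * G.nP ≤ (8 * G.nV ^ 2) * G.nV :=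
        Nat.mul_le_mul hEx2 hPle
      have hcube : (8 * G.nV ^ 2) * G.nV = 8 * G.nV ^ 3 := by ring
      have h4 : 4 ≤ G.nV ^ 2 := by
        calc (4 : ℕ) = 2 * 2 := by norm_num
          _ ≤ G.nV * G.nV := Nat.mul_le_mul hV2 hV2
          _ = G.nV ^ 2 := (pow_two _).symm
      have h2v3 : 2 * G.nV ≤ G.nV ^ 3 := by
        calc 2 * G.nV ≤ 4 * G.nV := by omega
          _ ≤ G.nV ^ 2 * G.nV := Nat.mul_le_mul h4 le_rfl
          _ = G.nV ^ 3 := by ring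
      have h32 : 32 ≤ G.nV ^ 5 := by
        calc (32 : ℕ) = 2 ^ 5 := by norm_num
          _ ≤ G.nV ^ 5 := Nat.pow_le_pow_left hV2 _
      have h9 : 9 * G.nV ^ 3 ≤ 8 * G.nV ^ 8 := by
        calc 9 * G.nV ^ 3 ≤ (8 * 32) * G.nV ^ 3 := Nat.mul_le_mul_right _ (by omega)
          _ ≤ (8 * G.nV ^ 5) * G.nV ^ 3 :=
            Nat.mul_le_mul_right _ (Nat.mul_le_mul_left _ h32)
          _ = 8 * G.nV ^ 8 := by ring
      omega
    calc G.nV * 2 ^ G.nP * (mR (lam K) Set.univ + 2) ^ G.nP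
        ≤ 2 ^ (G.nV + G.nP + ((G.nV + 3) * (G.nP + 2) + G.nV + 2) * G.nP) := hLHS
      _ ≤ 2 ^ (8 * G.nV ^ 8) := Nat.pow_le_pow_right (by omega) hexp


end SPE
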